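/- Let c be a prime and r ≥ 1. For m, k < c^r, the binomial coefficient binomial(m+k,k) mod c equals binomial(m_r' + k_r', k_r') · binomial(m'+k', k') mod c, where m = m_r' c^{r-1} + m', k = k_r' c^{r-1} + k' with m', k' < c^{r-1}; consequently the c^r × c^r matrix (binomial(m+k,k) mod c)_{0≤m,k<c^r} is invertible over ℤ/cℤ. -/

import Mathlib

/-- Iterated Lucas: splitting at `p ^ a`. -/
lemma lucas_pow (p : ℕ) [Fact p.Prime] (a : ℕ) : ∀ n k : ℕ,
    ((n.choose k : ZMod p)) =
      ((n / p ^ a).choose (k / p ^ a) : ZMod p) *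
        ((n % p ^ a).choose (k % p ^ a) : ZMod p) := by
  induction a with
  | zero => intro n k; simp [Nat.mod_one]
  | succ a ih =>
    intro n k
    have h2 : ((n / p ^ a).choose (k / p ^ a) : ZMod p) =
        ((n / p ^ a % p).choose (k / p ^ a % p) : ZMod p) *
          ((n / p ^ a / p).choose (k / p ^ a / p) : ZMod p) := by
      have := (ZMod.natCast_eq_natCast_iff _ _ p).mpr
        (Choose.choose_modEq_choose_mod_mul_choose_div_nat
          (p := p) (n := n / p ^ a) (k := k / p ^ a))
      push_cast at this
      exact this
    have hdvd : p ^ a ∣ p ^ (a + 1) := pow_dvd_pow p (Nat.le_succ a)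
    have hmoddiv : ∀ x : ℕ, x % p ^ (a + 1) / p ^ a = x / p ^ a % p := by
      intro x
      rw [pow_succ, Nat.mod_mul_right_div_self]
    have hmodmod : ∀ x : ℕ, x % p ^ (a + 1) % p ^ a = x % p ^ a := fun x =>
      Nat.mod_mod_of_dvd x hdvd
    have h3 := ih (n % p ^ (a + 1)) (k % p ^ (a + 1))
    rw [hmoddiv, hmoddiv, hmodmod, hmodmod] at h3
    have hdd : ∀ x : ℕ, x / p ^ a / p = x / p ^ (a + 1) := by
      intro x; rw [Nat.div_div_eq_div_mul, ← pow_succ]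
    calc (n.choose k : ZMod p)
        = ((n / p ^ a).choose (k / p ^ a) : ZMod p) *
            ((n % p ^ a).choose (k % p ^ a) : ZMod p) := ih n k
      _ = (((n / p ^ a % p).choose (k / p ^ a % p) : ZMod p) *
            ((n / p ^ a / p).choose (k / p ^ a / p) : ZMod p)) *
            ((n % p ^ a).choose (k % p ^ a) : ZMod p) := by rw [h2]
      _ = ((n / p ^ (a + 1)).choose (k / p ^ (a + 1)) : ZMod p) *
            ((n % p ^ (a + 1)).choose (k % p ^ (a + 1)) : ZMod p) := by
          rw [hdd, hdd, h3]; ring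

/-- Single digit: `C(p-1, d) ≡ (-1)^d`. -/
lemma choose_pred_eq (p : ℕ) [hp : Fact p.Prime] : ∀ d : ℕ, d < p →
    (((p - 1).choose d : ZMod p)) = (-1) ^ d := by
  intro d
  induction d with
  | zero => intro _; simp
  | succ d ih =>
    intro hd
    have hd' : d < p := Nat.lt_of_succ_lt hd
    have key := Nat.choose_succ_right_eq (p - 1) d
    have hcast : ((((p - 1).choose (d + 1)) * (d + 1) : ℕ) : ZMod p)
        = ((((p - 1).choose d) * (p - 1 - d) : ℕ) : ZMod p) := by rw [key]
    push_cast at hcast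
    have hsub : ((p - 1 - d : ℕ) : ZMod p) = -(d + 1 : ZMod p) := by
      have h1 : p - 1 - d = p - (d + 1) := by omega
      have h2 : d + 1 ≤ p := hd.le
      rw [h1, Nat.cast_sub h2]
      simp [ZMod.natCast_self]
    rw [hsub, ih hd'] at hcast
    have hunit : ((d + 1 : ℕ) : ZMod p) ≠ 0 := by
      rw [Ne, ZMod.natCast_eq_zero_iff]
      exact fun h => absurd (Nat.le_of_dvd (Nat.succ_pos d) h) (Nat.not_le.mpr hd)
    push_cast at hunit
    have := mul_right_cancel₀ hunit
      (hcast.trans (by ring : (-1 : ZMod p) ^ d * -(d + 1 : ZMod p)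
        = ((-1) ^ (d + 1) * (d + 1) : ZMod p)))
    exact this

/-- Zero above the antidiagonal. -/
lemma choose_zero_of_ge (p : ℕ) [Fact p.Prime] (r m k : ℕ) (hm : m < p ^ r)
    (hk : k < p ^ r) (hsum : p ^ r ≤ m + k) : ((m + k).choose k : ZMod p) = 0 := by
  have h3 : (m + k) % p ^ r = m + k - p ^ r := by
    rw [Nat.mod_eq_sub_mod hsum, Nat.mod_eq_of_lt (by omega)]
  have h1 : (m + k) / p ^ r = 1 :=
    Nat.div_eq_of_lt_le (by omega) (by omega)
  have h2 : k / p ^ r = 0 := Nat.div_eq_of_lt hk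
  have h4 : k % p ^ r = k := Nat.mod_eq_of_lt hk
  rw [lucas_pow p r (m + k) k, h1, h2, h3, h4]
  rw [Nat.choose_eq_zero_of_lt (by omega : m + k - p ^ r < k)]
  simp

/-- Units on the antidiagonal. -/
lemma choose_pred_pow_isUnit (p : ℕ) [hp : Fact p.Prime] : ∀ r : ℕ, ∀ j : ℕ, j < p ^ r →
    IsUnit (((p ^ r - 1).choose j : ZMod p)) := by
  intro r
  induction r with
  | zero =>
    intro j hj
    simp only [pow_zero] at hj
    interval_cases j
    simp
  | succ r ih =>
    intro j hj
    have hc1 : 1 < p := hp.out.one_lt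
    have hpos : 0 < p ^ r := Nat.pow_pos (by omega)
    have hps : p ^ (r + 1) = p * p ^ r := by rw [pow_succ, mul_comm]
    have hmul : p * (p ^ r - 1) = p * p ^ r - p := by
      rw [Nat.mul_sub, mul_one]
    have hDp : p ≤ p * p ^ r := Nat.le_mul_of_pos_right p hpos
    have heq : p ^ (r + 1) - 1 = (p - 1) + (p ^ r - 1) * p := by
      have h' : (p ^ r - 1) * p = p * (p ^ r - 1) := mul_comm _ _
      omega
    have hd : (p ^ (r + 1) - 1) / p = p ^ r - 1 := by
      rw [heq, Nat.add_mul_div_right _ _ (by omega : 0 < p),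
        Nat.div_eq_of_lt (by omega), zero_add]
    have hmo : (p ^ (r + 1) - 1) % p = p - 1 := by
      rw [heq, Nat.add_mul_mod_self_right, Nat.mod_eq_of_lt (by omega)]
    rw [lucas_pow p 1 (p ^ (r + 1) - 1) j]
    simp only [pow_one]
    rw [hd, hmo]
    apply IsUnit.mul
    · apply ih
      exact Nat.div_lt_of_lt_mul (hps ▸ hj)
    · rw [choose_pred_eq p (j % p) (Nat.mod_lt _ (by omega))]
      exact (IsUnit.neg isUnit_one).pow _

theorem stmt_16 (c : ℕ) (hc : c.Prime) (r : ℕ) (hr : 1 ≤ r) :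
    (∀ m k : ℕ, m < c ^ r → k < c ^ r →
      ((m + k).choose k : ZMod c) =
        ((m / c ^ (r - 1) + k / c ^ (r - 1)).choose (k / c ^ (r - 1)) : ZMod c) *
          ((m % c ^ (r - 1) + k % c ^ (r - 1)).choose (k % c ^ (r - 1)) : ZMod c)) ∧
    IsUnit (Matrix.of fun m k : Fin (c ^ r) =>
      (((m : ℕ) + (k : ℕ)).choose (k : ℕ) : ZMod c)) := by
  haveI : Fact c.Prime := ⟨hc⟩
  set q := c ^ (r - 1) with hq
  have hqpos : 0 < q := Nat.pow_pos hc.pos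
  constructor
  · intro m k hm hk
    by_cases hcar : m % q + k % q < q
    · -- no carry
      have hmk : m + k = q * (m / q + k / q) + (m % q + k % q) := by
        have h1 := Nat.div_add_mod m q
        have h2 := Nat.div_add_mod k q
        rw [mul_add]
        omega
      have hdiv : (m + k) / q = m / q + k / q := by
        rw [hmk, Nat.mul_add_div hqpos, Nat.div_eq_of_lt hcar, add_zero]
      have hmod : (m + k) % q = m % q + k % q := by
        rw [hmk, Nat.mul_add_mod, Nat.mod_eq_of_lt hcar]
      rw [lucas_pow c (r - 1) (m + k) k, hdiv, hmod]
    · -- carry: both sides vanish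
      push_neg at hcar
      have hmq : m % q < q := Nat.mod_lt _ hqpos
      have hkq : k % q < q := Nat.mod_lt _ hqpos
      have hmk : m + k = q * (m / q + k / q) + (m % q + k % q) := by
        have h1 := Nat.div_add_mod m q
        have h2 := Nat.div_add_mod k q
        rw [mul_add]
        omega
      have hmod : (m + k) % q = m % q + k % q - q := by
        rw [hmk, Nat.mul_add_mod]
        rw [Nat.mod_eq_sub_mod hcar, Nat.mod_eq_of_lt (by omega)]
      have hlhs : ((m + k).choose k : ZMod c) = 0 := by
        rw [lucas_pow c (r - 1) (m + k) k, hmod,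
          Nat.choose_eq_zero_of_lt (by omega : m % q + k % q - q < k % q)]
        simp
      have hrhs : ((m % q + k % q).choose (k % q) : ZMod c) = 0 :=
        choose_zero_of_ge c (r - 1) (m % q) (k % q) hmq hkq hcar
      rw [hlhs, hrhs, mul_zero]
  · set N := c ^ r with hN
    have hNpos : 0 < N := Nat.pow_pos hc.pos
    set M : Matrix (Fin N) (Fin N) (ZMod c) := Matrix.of fun m k : Fin N =>
      (((m : ℕ) + (k : ℕ)).choose (k : ℕ) : ZMod c) with hM
    rw [Matrix.isUnit_iff_isUnit_det]
    have hperm := Matrix.det_permute' Fin.revPerm M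
    have htri : (M.submatrix id ⇑Fin.revPerm).BlockTriangular id := by
      intro i j hij
      simp only [Matrix.submatrix_apply, id_eq, hM, Matrix.of_apply]
      have hrev : ((Fin.revPerm j : Fin N) : ℕ) = N - 1 - (j : ℕ) := by
        simp [Fin.rev]
        omega
      rw [hrev]
      have hge : N ≤ (i : ℕ) + (N - 1 - (j : ℕ)) := by
        have : (j : ℕ) < (i : ℕ) := hij
        have := j.isLt
        omega
      exact choose_zero_of_ge c r _ _ i.isLt (by have := j.isLt; omega) hge
    have hdet := Matrix.det_of_upperTriangular htri
    have hdiag : IsUnit (M.submatrix id ⇑Fin.revPerm).det := by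
      rw [hdet]
      apply Finset.prod_induction _ IsUnit (fun a b => IsUnit.mul) isUnit_one
      intro i _
      simp only [Matrix.submatrix_apply, id_eq, hM, Matrix.of_apply]
      have hrev : ((Fin.revPerm i : Fin N) : ℕ) = N - 1 - (i : ℕ) := by
        simp [Fin.rev]; omega
      rw [hrev]
      have hsum : (i : ℕ) + (N - 1 - (i : ℕ)) = N - 1 := by
        have := i.isLt; omega
      rw [hsum]
      exact choose_pred_pow_isUnit c r (N - 1 - (i : ℕ)) (by have := i.isLt; omega)
    rw [hperm] at hdiag
    exact isUnit_of_mul_isUnit_right hdiag
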